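/- Let V, W be ℂ-vector spaces, let M = (M₁,...,Mₛ) ∈ Hom(V,W)ˢ with s ≥ 1, and let l be a natural number. If the rank of M is at least l·s, then there exists a subspace V' ⊆ V of dimension l such that the subspace M₁V' + M₂V' + ... + MₛV' of W has dimension l·s. -/

import Mathlib

open Submodule Polynomial Module

lemma rank_le_rank_quotcomp_add {V W : Type*} [AddCommGroup V] [Module ℂ V]
    [AddCommGroup W] [Module ℂ W] (T : V →ₗ[ℂ] W) (U : Submodule ℂ W) :
    LinearMap.rank T ≤ LinearMap.rank (U.mkQ ∘ₗ T) + Module.rank ℂ U := by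
  classical
  set q : Submodule ℂ W := LinearMap.range T with hq
  have h := LinearMap.rank_range_add_rank_ker (U.mkQ.comp q.subtype)
  have hrange : LinearMap.range (U.mkQ.comp q.subtype) = LinearMap.range (U.mkQ ∘ₗ T) := by
    rw [LinearMap.range_comp, LinearMap.range_comp, Submodule.range_subtype]
  have hker : LinearMap.ker (U.mkQ.comp q.subtype) = comap q.subtype (U ⊓ q) := by
    rw [LinearMap.ker_comp, Submodule.ker_mkQ]
    ext x; simp [x.2]
  have e1 : Module.rank ℂ (comap q.subtype (U ⊓ q)) = Module.rank ℂ (U ⊓ q : Submodule ℂ W) :=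
    (Submodule.comapSubtypeEquivOfLe inf_le_right).rank_eq
  have : LinearMap.rank T = Module.rank ℂ q := rfl
  rw [this, ← h, hrange, hker, e1]
  exact add_le_add le_rfl (Submodule.rank_mono inf_le_left)

lemma exists_indep_eval {V W : Type*} [AddCommGroup V] [Module ℂ V]
    [AddCommGroup W] [Module ℂ W] {s : ℕ} (N : Fin s → V →ₗ[ℂ] W)
    (hN : ∀ lam : Fin s → ℂ, lam ≠ 0 →
      ((s : ℕ) : Cardinal) ≤ LinearMap.rank (∑ i, lam i • N i)) :
    ∃ v : V, LinearIndependent ℂ fun i => N i v := by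
  classical
  set F : V → ℕ := fun u => (Set.range fun i => N i u).finrank ℂ with hF
  have hFle : ∀ u, F u ≤ s := fun u => by
    simpa using finrank_range_le_card (R := ℂ) (fun i => N i u)
  have hbdd : BddAbove (Set.range F) := ⟨s, by rintro a ⟨u, rfl⟩; exact hFle u⟩
  set r : ℕ := sSup (Set.range F) with hr
  obtain ⟨v₀, hv₀⟩ : ∃ v₀, F v₀ = r := Nat.sSup_mem (Set.range_nonempty F) hbdd
  have hmax : ∀ u, F u ≤ r := fun u => le_csSup hbdd ⟨u, rfl⟩
  by_cases hrs : r = s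
  · refine ⟨v₀, linearIndependent_iff_card_eq_finrank_span.2 ?_⟩
    rw [Fintype.card_fin]
    exact (hv₀.trans hrs).symm
  exfalso
  have hrlt : r < s := lt_of_le_of_ne (hv₀ ▸ hFle v₀) hrs
  set g : Fin s → W := fun i => N i v₀ with hg
  obtain ⟨b, hbsub, hbspan, hbind⟩ := exists_linearIndependent ℂ (Set.range g)
  have hbfin : b.Finite := (Set.finite_range g).subset hbsub
  haveI : Fintype b := hbfin.fintype
  have hcardb : Fintype.card b = r := by
    have h1 : finrank ℂ (span ℂ b) = b.toFinset.card := finrank_span_set_eq_card hbind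
    have h2 : b.toFinset.card = Fintype.card b := Set.toFinset_card b
    have h3 : finrank ℂ (span ℂ b) = F v₀ := by rw [hbspan]; rfl
    omega
  -- choose preimages
  have hσex : ∀ x : b, ∃ i, g i = x := fun x => hbsub x.2
  choose σ hσeq using hσex
  -- j₀ outside the range of σ
  obtain ⟨j₀, hj₀⟩ : ∃ j₀, ∀ x : b, σ x ≠ j₀ := by
    by_contra h
    push_neg at h
    have hsurj : Function.Surjective σ := fun j => h j
    have := Fintype.card_le_of_surjective σ hsurj
    rw [hcardb, Fintype.card_fin] at this
    omega
  -- representation of g j₀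
  obtain ⟨c, hc⟩ : ∃ c : b → ℂ, ∑ x : b, c x • (x : W) = g j₀ := by
    rw [← mem_span_range_iff_exists_fun, Subtype.range_coe, hbspan]
    exact subset_span (Set.mem_range_self _)
  set N' : V →ₗ[ℂ] W := N j₀ - ∑ x : b, c x • N (σ x) with hN'
  have hN'v₀ : N' v₀ = 0 := by
    simp only [hN', LinearMap.sub_apply, LinearMap.sum_apply, LinearMap.smul_apply]
    have : ∀ x : b, c x • N (σ x) v₀ = c x • (x : W) := fun x => by rw [show N (σ x) v₀ = x from hσeq x]
    rw [Finset.sum_congr rfl fun x _ => this x, hc]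
    simp [hg]
  have hrankN' : ((s : ℕ) : Cardinal) ≤ LinearMap.rank N' := by
    set lam : Fin s → ℂ := fun i => (if i = j₀ then (1:ℂ) else 0) - ∑ x : b, (if σ x = i then c x else 0) with hlam
    have hsum : ∑ i, lam i • N i = N' := by
      simp only [hlam, sub_smul, Finset.sum_sub_distrib, hN']
      congr 1
      · simp
      · rw [Finset.sum_congr rfl fun i _ => Finset.sum_smul (R := ℂ)]
        rw [Finset.sum_comm]
        refine Finset.sum_congr rfl fun x _ => ?_
        simp [ite_smul]
    have hlamne : lam ≠ 0 := by
      intro h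
      have := congrFun h j₀
      simp only [hlam, Pi.zero_apply, if_pos rfl] at this
      rw [Finset.sum_eq_zero (fun x _ => if_neg (hj₀ x))] at this
      norm_num at this
    rw [← hsum]
    exact hN lam hlamne
  -- dual family
  set φ : W →ₗ[ℂ] (b → ℂ) :=
    LinearMap.pi (fun x : b => (Basis.extend hbind).coord ⟨x.1, Module.Basis.subset_extend hbind x.2⟩) with hφ
  have hφδ : ∀ x y : b, φ (y : W) x = if x = y then 1 else 0 := by
    intro x y
    have hy : (y : W) = (Basis.extend hbind) ⟨y.1, Module.Basis.subset_extend hbind y.2⟩ :=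
      (Basis.extend_apply_self hbind ⟨y.1, Module.Basis.subset_extend hbind y.2⟩).symm
    simp only [hφ, LinearMap.pi_apply, Basis.coord_apply]
    rw [hy, Basis.repr_self, Finsupp.single_apply]
    by_cases h : x = y
    · subst h; simp
    · rw [if_neg, if_neg h]
      exact fun hh => h (Subtype.ext (congrArg Subtype.val hh).symm)
  -- main claim: range of N' lies in span b
  have hmem : ∀ v : V, N' v ∈ span ℂ b := by
    intro v
    set w := N' v with hw
    set Bmat : Matrix b b ℂ := Matrix.of fun x y => φ (N (σ y) v) x with hBmat
    set Pm : Matrix b b ℂ[X] := Matrix.of fun x y =>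
      C (if x = y then (1:ℂ) else 0) + X * C (Bmat x y) with hPm
    set Amat : ℂ → Matrix b b ℂ := fun t => Matrix.of fun x y =>
      (if x = y then (1:ℂ) else 0) + t * Bmat x y with hAmat
    have hmap : ∀ t, (evalRingHom t).mapMatrix Pm = Amat t := by
      intro t; ext x y
      simp only [RingHom.mapMatrix_apply, Matrix.map_apply, hPm, hAmat, Matrix.of_apply,
        coe_evalRingHom, eval_add, eval_mul, eval_C, eval_X]
    set p : ℂ[X] := Pm.det with hp
    have hdet : ∀ t, (Amat t).det = p.eval t := by
      intro t
      rw [hp, ← hmap t]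
      exact ((evalRingHom t).map_det Pm).symm
    have hp0 : p.eval 0 = 1 := by
      rw [← hdet 0]
      have h0 : Amat 0 = 1 := by ext x y; simp [hAmat, Matrix.one_apply]
      rw [h0, Matrix.det_one]
    have hpne : p ≠ 0 := fun h => by simp [h] at hp0
    set u : b → ℂ → W := fun x t => (x : W) + t • N (σ x) v with hu
    have hueq : ∀ (x : b) (t : ℂ), u x t = N (σ x) (v₀ + t • v) := by
      intro x t
      rw [map_add, map_smul, show N (σ x) v₀ = (x:W) from hσeq x, hu]
    have hφu : ∀ (t : ℂ) (x y : b), φ (u y t) x = Amat t x y := by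
      intro t x y
      simp only [hu, map_add, map_smul, Pi.add_apply, Pi.smul_apply, hφδ, smul_eq_mul,
        hAmat, Matrix.of_apply, hBmat]
    set qv : b → ℂ[X] := (Pm.adjugate).mulVec (fun x => C (φ w x)) with hqv
    have hkey : ∀ t : ℂ, t ≠ 0 → p.eval t ≠ 0 →
        p.eval t • w = ∑ x : b, (qv x).eval t • u x t := by
      intro t ht hpt
      have hunit : IsUnit (Amat t).det := by rw [hdet t]; exact hpt.isUnit
      have hindep : LinearIndependent ℂ (fun x : b => u x t) := by
        rw [Fintype.linearIndependent_iff]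
        intro d hd x
        have h1 : (Amat t).mulVec d = 0 := by
          funext y
          have h2 := congrArg (fun z => φ z y) hd
          simp only [map_sum, map_smul, Finset.sum_apply, Pi.smul_apply, smul_eq_mul,
            map_zero, Pi.zero_apply, hφu] at h2
          simpa [Matrix.mulVec, dotProduct, mul_comm] using h2
        have h3 : d = 0 := by
          have h4 := congrArg (fun z => (Amat t)⁻¹.mulVec z) h1
          simpa [Matrix.mulVec_mulVec, Matrix.nonsing_inv_mul _ hunit] using h4
        exact congrFun h3 x
      have hle : span ℂ (Set.range fun x : b => u x t) ≤
          span ℂ (Set.range fun i => N i (v₀ + t • v)) := by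
        rw [span_le]
        rintro _ ⟨x, rfl⟩
        exact subset_span ⟨σ x, (hueq x t).symm⟩
      haveI hTfin : FiniteDimensional ℂ (span ℂ (Set.range fun i => N i (v₀ + t • v))) :=
        FiniteDimensional.span_of_finite ℂ (Set.finite_range _)
      have hsp : span ℂ (Set.range fun x : b => u x t) =
          span ℂ (Set.range fun i => N i (v₀ + t • v)) := by
        apply Submodule.eq_of_le_of_finrank_le hle
        have h5 : finrank ℂ (span ℂ (Set.range fun x : b => u x t)) = r := by
          rw [finrank_span_eq_card hindep]
          simpa using hcardb
        rw [h5]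
        exact hmax (v₀ + t • v)
      have hmem1 : N' (v₀ + t • v) ∈ span ℂ (Set.range fun i => N i (v₀ + t • v)) := by
        simp only [hN', LinearMap.sub_apply, LinearMap.sum_apply, LinearMap.smul_apply]
        exact sub_mem (subset_span ⟨j₀, rfl⟩)
          (sum_mem fun x _ => smul_mem _ _ (subset_span ⟨σ x, rfl⟩))
      have hmem2 : t • w ∈ span ℂ (Set.range fun x : b => u x t) := by
        rw [hsp]
        have h6 : N' (v₀ + t • v) = t • w := by rw [map_add, map_smul, hN'v₀, zero_add, hw]
        rwa [h6] at hmem1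
      have hmem3 : w ∈ span ℂ (Set.range fun x : b => u x t) := by
        have h7 := Submodule.smul_mem _ t⁻¹ hmem2
        rwa [smul_smul, inv_mul_cancel₀ ht, one_smul] at h7
      obtain ⟨d, hd⟩ := (mem_span_range_iff_exists_fun ℂ).1 hmem3
      have hAd : (Amat t).mulVec d = φ w := by
        funext y
        have h2 := congrArg (fun z => φ z y) hd
        simp only [map_sum, map_smul, Finset.sum_apply, Pi.smul_apply, smul_eq_mul, hφu] at h2
        simpa [Matrix.mulVec, dotProduct, mul_comm] using h2
      have hqe : ∀ x : b, (qv x).eval t = p.eval t * d x := by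
        intro x
        have h7 : (qv x).eval t = ((Amat t).adjugate).mulVec (φ w) x := by
          rw [← hmap t, ← (evalRingHom t).map_adjugate Pm]
          simp [hqv, Matrix.mulVec, dotProduct, RingHom.mapMatrix_apply,
            Matrix.map_apply, Polynomial.eval_finset_sum]
        rw [h7, ← hAd, Matrix.mulVec_mulVec, Matrix.adjugate_mul, hdet t,
          Matrix.smul_mulVec, Matrix.one_mulVec]
        simp
      rw [← hd, Finset.smul_sum]
      refine Finset.sum_congr rfl fun x _ => ?_
      rw [hqe x, mul_smul]
    -- polynomial vanishing argument
    have hgood : {t : ℂ | p.eval t ≠ 0 ∧ t ≠ 0}.Infinite := by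
      have hfin : ({t : ℂ | p.IsRoot t} ∪ {0}).Finite :=
        (Polynomial.finite_setOf_isRoot hpne).union (Set.finite_singleton 0)
      refine ((Set.infinite_univ).diff hfin).mono ?_
      intro t ht
      simp only [Set.mem_diff, Set.mem_union, Set.mem_setOf_eq, Set.mem_singleton_iff,
        IsRoot] at ht ⊢
      exact ⟨fun h => ht.2 (Or.inl h), fun h => ht.2 (Or.inr h)⟩
    have hfinal : ∀ f : Module.Dual ℂ W, f w = ∑ x : b, (qv x).eval 0 * f (x : W) := by
      intro f
      set G : ℂ[X] := p * C (f w) - ∑ x : b, qv x * C (f (x:W))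
        - ∑ x : b, X * qv x * C (f (N (σ x) v)) with hG
      have hGroot : ∀ t ∈ {t : ℂ | p.eval t ≠ 0 ∧ t ≠ 0}, G.IsRoot t := by
        intro t ht
        obtain ⟨h1, h2⟩ := ht
        have h3 := congrArg f (hkey t h2 h1)
        rw [map_smul, map_sum] at h3
        simp only [hu, map_smul, map_add, smul_eq_mul] at h3
        simp only [IsRoot, hG, eval_sub, eval_mul, eval_C, eval_X, eval_finset_sum]
        rw [h3, ← Finset.sum_sub_distrib, ← Finset.sum_sub_distrib]
        exact Finset.sum_eq_zero fun x _ => by ring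
      have hG0 : G = 0 := Polynomial.eq_zero_of_infinite_isRoot G (hgood.mono hGroot)
      have h4 := congrArg (eval 0) hG0
      simp only [hG, eval_sub, eval_mul, eval_C, eval_X, eval_finset_sum, eval_zero, hp0] at h4
      simp only [zero_mul, Finset.sum_const_zero] at h4
      linear_combination h4
    have hwsum : w = ∑ x : b, (qv x).eval 0 • (x : W) := by
      rw [← sub_eq_zero, ← Module.forall_dual_apply_eq_zero_iff ℂ]
      intro f
      rw [map_sub, map_sum, hfinal f]
      simp only [map_smul, smul_eq_mul]
      rw [sub_eq_zero]
    rw [hwsum]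
    exact sum_mem fun x _ => smul_mem _ _ (subset_span x.2)
  -- contradiction with the rank of N'
  have hrange : LinearMap.range N' ≤ span ℂ b := by
    rintro _ ⟨v, rfl⟩; exact hmem v
  have h8 : LinearMap.rank N' ≤ Module.rank ℂ (span ℂ b) := Submodule.rank_mono hrange
  have h9 : Module.rank ℂ (span ℂ b) ≤ (r : Cardinal) := by
    have h10 := rank_span_le (R := ℂ) b
    rwa [Cardinal.mk_fintype, hcardb] at h10
  have h11 := hrankN'.trans (h8.trans h9)
  rw [Nat.cast_le] at h11
  omega

/-- If a tuple `M = (M₁,...,Mₛ)` of linear maps `V → W` has rank at least `l·s`,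
then there is an `l`-dimensional subspace `V' ⊆ V` such that
`M₁V' + ... + MₛV'` has dimension `l·s`. -/
theorem exists_subspace_free_image {V W : Type*}
    [AddCommGroup V] [Module ℂ V] [AddCommGroup W] [Module ℂ W] {s : ℕ}
    (hs : 0 < s) (l : ℕ) (M : Fin s → (V →ₗ[ℂ] W))
    (hM : ∀ lam : Fin s → ℂ, lam ≠ 0 →
      ((l * s : ℕ) : Cardinal) ≤ LinearMap.rank (∑ i, lam i • M i)) :
    ∃ V' : Submodule ℂ V, Module.rank ℂ V' = l ∧
      Module.rank ℂ (⨆ i : Fin s, V'.map (M i) : Submodule ℂ W) = l * s := by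
  classical
  induction l with
  | zero =>
    refine ⟨⊥, by simp, ?_⟩
    have h0 : (⨆ i : Fin s, (⊥ : Submodule ℂ V).map (M i)) = ⊥ := by
      simp
    rw [h0]
    simp
  | succ l ih =>
    obtain ⟨V', hV'rank, hV'img⟩ := ih (fun lam hlam => by
      refine le_trans ?_ (hM lam hlam)
      exact_mod_cast Nat.cast_le.2 (Nat.mul_le_mul_right s (Nat.le_succ l)))
    set U : Submodule ℂ W := ⨆ i, V'.map (M i) with hU
    set N : Fin s → V →ₗ[ℂ] (W ⧸ U) := fun i => U.mkQ ∘ₗ M i with hNdef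
    have hNrank : ∀ lam : Fin s → ℂ, lam ≠ 0 →
        ((s : ℕ) : Cardinal) ≤ LinearMap.rank (∑ i, lam i • N i) := by
      intro lam hlam
      have hcomp : ∑ i, lam i • N i = U.mkQ ∘ₗ (∑ i, lam i • M i) := by
        ext v
        simp [hNdef, LinearMap.sum_apply]
      have h1 := rank_le_rank_quotcomp_add (∑ i, lam i • M i) U
      have h2 := hM lam hlam
      rw [hcomp]
      by_contra h
      push_neg at h
      obtain ⟨n, hn⟩ := Cardinal.lt_aleph0.1 (h.trans (Cardinal.nat_lt_aleph0 s))
      rw [hn] at h h1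
      rw [hV'img] at h1
      have h2' := h2.trans h1
      have e1 : ((n + l * s : ℕ) : Cardinal) = ↑n + ↑l * ↑s := by push_cast; ring
      rw [← e1, Nat.cast_le] at h2'
      rw [Nat.cast_lt] at h
      nlinarith [h2', h]
    obtain ⟨v, hv⟩ := exists_indep_eval N hNrank
    have hMU : ∀ i, v ∈ V' → M i v ∈ U := fun i hvin =>
      le_iSup (fun i => V'.map (M i)) i (mem_map_of_mem hvin)
    have hvnotin : v ∉ V' := by
      intro hvin
      refine hv.ne_zero ⟨0, hs⟩ ?_
      simp only [hNdef, LinearMap.comp_apply, Submodule.mkQ_apply]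
      exact (Submodule.Quotient.mk_eq_zero U).2 (hMU _ hvin)
    have hvne : v ≠ 0 := fun h => hvnotin (h ▸ zero_mem V')
    refine ⟨V' ⊔ (ℂ ∙ v), ?_, ?_⟩
    · have hinf : V' ⊓ (ℂ ∙ v) = ⊥ := by
        rw [eq_bot_iff]
        rintro x hx
        obtain ⟨hx1, hx2⟩ := Submodule.mem_inf.1 hx
        obtain ⟨a, rfl⟩ := Submodule.mem_span_singleton.1 hx2
        rcases eq_or_ne a 0 with rfl | ha
        · simp
        · exact absurd (by
            have : v = a⁻¹ • (a • v) := by rw [smul_smul, inv_mul_cancel₀ ha, one_smul]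
            rw [this]
            exact Submodule.smul_mem _ _ hx1) hvnotin
      have hsum := Submodule.rank_sup_add_rank_inf_eq V' (ℂ ∙ v)
      haveI : FiniteDimensional ℂ (ℂ ∙ v : Submodule ℂ V) :=
        FiniteDimensional.span_of_finite ℂ (Set.finite_singleton v)
      have hsv : Module.rank ℂ (ℂ ∙ v : Submodule ℂ V) = 1 := by
        rw [← Module.finrank_eq_rank, finrank_span_singleton hvne]
        norm_num
      rw [hinf, rank_bot, add_zero, hV'rank, hsv] at hsum
      rw [hsum]
      push_cast
      ring
    · set S : Submodule ℂ W := span ℂ (Set.range fun i => M i v) with hS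
      have himg : (⨆ i, (V' ⊔ (ℂ ∙ v)).map (M i)) = U ⊔ S := by
        simp only [Submodule.map_sup]
        rw [iSup_sup_eq, hU, hS, span_range_eq_iSup]
        congr 1
        refine iSup_congr fun i => ?_
        rw [Submodule.map_span, Set.image_singleton]
      have hMiv : LinearIndependent ℂ (fun i => M i v) := by
        apply LinearIndependent.of_comp U.mkQ
        exact hv
      have hinf : U ⊓ S = ⊥ := by
        rw [eq_bot_iff]
        rintro x hx
        obtain ⟨hxU, hxS⟩ := Submodule.mem_inf.1 hx
        obtain ⟨cc, rfl⟩ := (mem_span_range_iff_exists_fun ℂ).1 hxS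
        have hz : ∀ i, cc i = 0 := by
          apply Fintype.linearIndependent_iff.1 hv
          have : U.mkQ (∑ i, cc i • M i v) = 0 := (Submodule.Quotient.mk_eq_zero U).2 hxU
          rw [map_sum] at this
          simpa [hNdef] using this
        simp [hz]
      have hranks : Module.rank ℂ S = (s : Cardinal) := by
        haveI : FiniteDimensional ℂ S := FiniteDimensional.span_of_finite ℂ (Set.finite_range _)
        rw [hS, ← Module.finrank_eq_rank, finrank_span_eq_card hMiv]
        simp
      have hsum := Submodule.rank_sup_add_rank_inf_eq U S
      rw [hinf, rank_bot, add_zero, hV'img, hranks] at hsum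
      rw [himg, hsum]
      push_cast
      ring
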